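/- arXiv:2605.03481 — 3 statements merged into one kernel-verified Lean document; each statement's English description precedes it below -/
import Mathlib

section
/- Let n ≥ 3 be an integer, λ ∈ ℝ, k ≥ 2 an integer, h₀, …, h_k ∈ ℝ⁴ and f ∈ ℝ⁴. If the function h(s) := Σ_{m=0}^{k} s^λ·(log s)^m·h_m satisfies (L_Ric h)(s) = s^λ·f for all s ∈ (0,1), then M(n,λ)·h_k = 0 and M′(n,λ)·h_k lies in the column space of M(n,λ). -/
open Matrix

/-- The indicial family `I(D Ric − Λ, λ)` (with `Λ = n`) of the linearized Einstein
operator on asymptotically de Sitter space, in the scalar block decomposition. -/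
noncomputable def M (n : ℕ) (lam : ℝ) : Matrix (Fin 4) (Fin 4) ℝ :=
  (1 / 2 : ℝ) • !![(n : ℝ) * (lam - 2), 0, -(n : ℝ) * lam * (lam - 2), 0;
                   0, 0, 0, 0;
                   2 * (n : ℝ) - lam, 0, lam * (lam - 2 * (n : ℝ)), 0;
                   0, 0, 0, lam * (lam - (n : ℝ))]

/-- `A₂`: the coefficient of `λ²` in `M(n,λ) = A₂λ² + A₁λ + A₀`. -/
noncomputable def A2 (n : ℕ) : Matrix (Fin 4) (Fin 4) ℝ :=
  (1 / 2 : ℝ) • !![0, 0, -(n : ℝ), 0;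
                   0, 0, 0, 0;
                   0, 0, 1, 0;
                   0, 0, 0, 1]

/-- `A₁`: the coefficient of `λ` in `M(n,λ) = A₂λ² + A₁λ + A₀`. -/
noncomputable def A1 (n : ℕ) : Matrix (Fin 4) (Fin 4) ℝ :=
  (1 / 2 : ℝ) • !![(n : ℝ), 0, 2 * (n : ℝ), 0;
                   0, 0, 0, 0;
                   -1, 0, -2 * (n : ℝ), 0;
                   0, 0, 0, -(n : ℝ)]

/-- `A₀`: the constant coefficient in `M(n,λ) = A₂λ² + A₁λ + A₀`. -/
noncomputable def A0 (n : ℕ) : Matrix (Fin 4) (Fin 4) ℝ :=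
  (1 / 2 : ℝ) • !![-2 * (n : ℝ), 0, 0, 0;
                   0, 0, 0, 0;
                   2 * (n : ℝ), 0, 0, 0;
                   0, 0, 0, 0]

/-- The operator `s d/ds` acting on `ℝ⁴`-valued functions of `s`. -/
noncomputable def sD (h : ℝ → (Fin 4 → ℝ)) : ℝ → (Fin 4 → ℝ) :=
  fun s => s • deriv h s

/-- The indicial (Euler) operator
`(L_Ric h)(s) = A₂ (s d/ds)² h(s) + A₁ (s d/ds) h(s) + A₀ h(s)`. -/
noncomputable def LRic (n : ℕ) (h : ℝ → (Fin 4 → ℝ)) : ℝ → (Fin 4 → ℝ) :=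
  fun s => (A2 n).mulVec (sD (sD h) s) + (A1 n).mulVec (sD h s) + (A0 n).mulVec (h s)

/-- The entrywise `j`-th derivative of `M(n,λ)` with respect to `λ`. -/
noncomputable def Mder (n : ℕ) (j : ℕ) (lam : ℝ) : Matrix (Fin 4) (Fin 4) ℝ :=
  Matrix.of fun i k => iteratedDeriv j (fun t : ℝ => M n t i k) lam

/- ===== auxiliary lemmas ===== -/

lemma deriv_quadratic (a b c x : ℝ) : deriv (fun t => a * t^2 + b * t + c) x = 2*a*x + b := by
  have h : HasDerivAt (fun t : ℝ => a * t^2 + b * t + c) (a * (2 * x^1) + b * 1) x :=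
    (((hasDerivAt_pow 2 x).const_mul a).add ((hasDerivAt_id x).const_mul b)).add_const c
  rw [h.deriv]; ring

lemma M_eq (n : ℕ) (t : ℝ) : M n t = t^2 • A2 n + t • A1 n + A0 n := by
  ext i j
  fin_cases i <;> fin_cases j <;>
    simp [M, A2, A1, A0, Matrix.smul_apply, Matrix.add_apply, Matrix.vecHead,
      Matrix.vecTail, Function.comp] <;> ring

lemma M_entry (n : ℕ) (i j : Fin 4) :
    (fun t : ℝ => M n t i j) = fun t => A2 n i j * t^2 + A1 n i j * t + A0 n i j := by
  funext t
  rw [M_eq n t]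
  simp [Matrix.add_apply, Matrix.smul_apply]
  ring

lemma Mder_one (n : ℕ) (lam : ℝ) : Mder n 1 lam = (2 * lam) • A2 n + A1 n := by
  ext i j
  rw [Mder, Matrix.of_apply, iteratedDeriv_one, M_entry, deriv_quadratic]
  simp [Matrix.add_apply, Matrix.smul_apply]
  ring

lemma term_hasDerivAt (lam : ℝ) (m : ℕ) (v : Fin 4 → ℝ) {s : ℝ} (hs : 0 < s) :
    HasDerivAt (fun t : ℝ => (t ^ lam * Real.log t ^ m) • v)
      ((lam * s ^ (lam - 1) * Real.log s ^ m
        + s ^ lam * ((m : ℝ) * Real.log s ^ (m - 1) * s⁻¹)) • v) s := by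
  have h1 : HasDerivAt (fun t : ℝ => t ^ lam) (lam * s ^ (lam - 1)) s :=
    Real.hasDerivAt_rpow_const (Or.inl hs.ne')
  have h2 : HasDerivAt (fun t : ℝ => Real.log t ^ m)
      ((m : ℝ) * Real.log s ^ (m - 1) * s⁻¹) s := by
    simpa using (Real.hasDerivAt_log hs.ne').fun_pow m
  exact (h1.mul h2).smul_const v

lemma sD_sum (lam : ℝ) (N : ℕ) (c : ℕ → Fin 4 → ℝ) (hc : c (N + 1) = 0)
    {s : ℝ} (hs : 0 < s) :
    sD (fun t => ∑ m ∈ Finset.range (N + 1), (t ^ lam * Real.log t ^ m) • c m) s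
      = ∑ m ∈ Finset.range (N + 1), (s ^ lam * Real.log s ^ m) •
          (lam • c m + ((m : ℝ) + 1) • c (m + 1)) := by
  have hd : HasDerivAt
      (fun t => ∑ m ∈ Finset.range (N + 1), (t ^ lam * Real.log t ^ m) • c m)
      (∑ m ∈ Finset.range (N + 1),
        (lam * s ^ (lam - 1) * Real.log s ^ m
          + s ^ lam * ((m : ℝ) * Real.log s ^ (m - 1) * s⁻¹)) • c m) s :=
    HasDerivAt.fun_sum fun m _ => term_hasDerivAt lam m (c m) hs
  have hpow : s * s ^ (lam - 1) = s ^ lam := by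
    rw [Real.rpow_sub hs, Real.rpow_one]; field_simp
  rw [sD, hd.deriv, Finset.smul_sum]
  have key : ∀ m ∈ Finset.range (N + 1),
      s • ((lam * s ^ (lam - 1) * Real.log s ^ m
          + s ^ lam * ((m : ℝ) * Real.log s ^ (m - 1) * s⁻¹)) • c m)
      = (lam * (s ^ lam * Real.log s ^ m)) • c m
        + ((m : ℝ) * (s ^ lam * Real.log s ^ (m - 1))) • c m := by
    intro m _
    rw [smul_smul, ← add_smul]
    congr 1
    field_simp
    linear_combination (lam * Real.log s ^ m) * hpow
  rw [Finset.sum_congr rfl key, Finset.sum_add_distrib]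
  have rhs : ∀ m ∈ Finset.range (N + 1),
      (s ^ lam * Real.log s ^ m) • (lam • c m + ((m : ℝ) + 1) • c (m + 1))
      = (lam * (s ^ lam * Real.log s ^ m)) • c m
        + (((m : ℝ) + 1) * (s ^ lam * Real.log s ^ m)) • c (m + 1) := by
    intro m _
    rw [smul_add, smul_smul, smul_smul, mul_comm]
    congr 2
    ring
  rw [Finset.sum_congr rfl rhs, Finset.sum_add_distrib]
  congr 1
  rw [Finset.sum_range_succ' (fun m => ((m : ℝ) * (s ^ lam * Real.log s ^ (m - 1))) • c m),
    Finset.sum_range_succ (fun m => (((m : ℝ) + 1) * (s ^ lam * Real.log s ^ m)) • c (m + 1)),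
    hc]
  simp

open Polynomial in
lemma coeff_zero_of_vanish (N : ℕ) (d : ℕ → ℝ) (f : ℝ)
    (h : ∀ x < (0:ℝ), ∑ m ∈ Finset.range N, x ^ m * d m = f) :
    ∀ m, 1 ≤ m → m < N → d m = 0 := by
  set p : ℝ[X] := (∑ m ∈ Finset.range N, C (d m) * X ^ m) - C f with hp
  have hroot : ∀ x < (0:ℝ), p.IsRoot x := by
    intro x hx
    simp only [hp, IsRoot, eval_sub, eval_finset_sum, eval_mul, eval_C, eval_pow, eval_X]
    rw [sub_eq_zero]
    calc ∑ m ∈ Finset.range N, d m * x ^ m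
        = ∑ m ∈ Finset.range N, x ^ m * d m :=
          Finset.sum_congr rfl fun m _ => mul_comm _ _
      _ = f := h x hx
  have hp0 : p = 0 := by
    apply Polynomial.eq_zero_of_infinite_isRoot
    apply Set.Infinite.mono (fun x hx => hroot x hx)
    exact Set.Iio_infinite 0
  intro m hm1 hmN
  have hco := congrArg (fun q : ℝ[X] => q.coeff m) hp0
  simp only [hp, coeff_sub, finset_sum_coeff, coeff_C, coeff_zero] at hco
  rw [if_neg (by omega : ¬ m = 0), sub_zero] at hco
  rw [← hco]
  rw [Finset.sum_eq_single m]
  · simp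
  · intro l _ hlm
    rw [coeff_C_mul, coeff_X_pow, if_neg (fun hh => hlm ?_), mul_zero]
    omega
  · intro hmem; exact absurd (Finset.mem_range.mpr hmN) hmem

lemma mulVec_sum' (A : Matrix (Fin 4) (Fin 4) ℝ) (N : ℕ) (x : ℕ → ℝ) (g : ℕ → Fin 4 → ℝ) :
    A.mulVec (∑ m ∈ Finset.range N, x m • g m)
      = ∑ m ∈ Finset.range N, x m • A.mulVec (g m) := by
  have h := map_sum A.mulVecLin (fun m => x m • g m) (Finset.range N)
  simpa only [Matrix.mulVecLin_apply, LinearMap.map_smul] using h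

/-- If `h(s) = Σ_{m≤k} s^λ (log s)^m h_m` (with `k ≥ 2`) solves `(L_Ric h)(s) = s^λ f`
on `(0,1)`, then the top log coefficient `h_k` lies in `ker M(n,λ)` and
`M′(n,λ) h_k ∈ ran M(n,λ)`. -/
theorem top_log_coefficient_constraints (n : ℕ) (hn : 3 ≤ n) (lam : ℝ)
    (k : ℕ) (hk : 2 ≤ k) (hv : ℕ → Fin 4 → ℝ) (f : Fin 4 → ℝ)
    (hEq : ∀ s ∈ Set.Ioo (0 : ℝ) 1,
      LRic n (fun t => ∑ m ∈ Finset.range (k + 1),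
        (t ^ lam * Real.log t ^ m) • hv m) s = s ^ lam • f) :
    (M n lam).mulVec (hv k) = 0 ∧
    (Mder n 1 lam).mulVec (hv k) ∈ LinearMap.range (M n lam).mulVecLin := by
  obtain ⟨j, rfl⟩ : ∃ j, k = j + 2 := ⟨k - 2, by omega⟩
  set c : ℕ → Fin 4 → ℝ := fun m => if m < j + 3 then hv m else 0 with hcdef
  set c1 : ℕ → Fin 4 → ℝ := fun m => lam • c m + ((m : ℝ) + 1) • c (m + 1) with hc1def
  set c2 : ℕ → Fin 4 → ℝ := fun m => lam • c1 m + ((m : ℝ) + 1) • c1 (m + 1) with hc2def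
  have hc3 : c (j + 3) = 0 := if_neg (by omega)
  have hc4 : c (j + 4) = 0 := if_neg (by omega)
  have hc13 : c1 (j + 3) = 0 := by
    rw [hc1def]
    show lam • c (j + 3) + _ • c (j + 3 + 1) = 0
    rw [hc3, show j + 3 + 1 = j + 4 from rfl, hc4, smul_zero, smul_zero, add_zero]
  set d : ℕ → Fin 4 → ℝ := fun m =>
    (A2 n).mulVec (c2 m) + (A1 n).mulVec (c1 m) + (A0 n).mulVec (c m) with hddef
  have hfun : (fun t => ∑ m ∈ Finset.range (j + 2 + 1), (t ^ lam * Real.log t ^ m) • hv m)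
      = fun t => ∑ m ∈ Finset.range (j + 2 + 1), (t ^ lam * Real.log t ^ m) • c m := by
    funext t
    refine Finset.sum_congr rfl fun m hm => ?_
    have hm' := Finset.mem_range.mp hm
    simp only [hcdef, if_pos (show m < j + 3 by omega)]
  -- the sum identity on (0,1)
  have hLR : ∀ s ∈ Set.Ioo (0 : ℝ) 1,
      ∑ m ∈ Finset.range (j + 3), (Real.log s) ^ m • d m = f := by
    intro s hs
    have hs0 : 0 < s := hs.1
    have h1 : sD (fun t => ∑ m ∈ Finset.range (j + 2 + 1),
          (t ^ lam * Real.log t ^ m) • c m) s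
        = ∑ m ∈ Finset.range (j + 2 + 1), (s ^ lam * Real.log s ^ m) • c1 m :=
      sD_sum lam (j + 2) c hc3 hs0
    have hev : sD (fun t => ∑ m ∈ Finset.range (j + 2 + 1),
          (t ^ lam * Real.log t ^ m) • c m)
        =ᶠ[nhds s] fun t => ∑ m ∈ Finset.range (j + 2 + 1),
          (t ^ lam * Real.log t ^ m) • c1 m := by
      filter_upwards [isOpen_Ioi.mem_nhds (Set.mem_Ioi.mpr hs0)] with t ht
      exact sD_sum lam (j + 2) c hc3 ht
    have h2 : sD (sD (fun t => ∑ m ∈ Finset.range (j + 2 + 1),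
          (t ^ lam * Real.log t ^ m) • c m)) s
        = ∑ m ∈ Finset.range (j + 2 + 1), (s ^ lam * Real.log s ^ m) • c2 m := by
      have e2 := sD_sum lam (j + 2) c1 hc13 hs0
      calc sD (sD (fun t => ∑ m ∈ Finset.range (j + 2 + 1),
              (t ^ lam * Real.log t ^ m) • c m)) s
          = s • deriv (sD (fun t => ∑ m ∈ Finset.range (j + 2 + 1),
              (t ^ lam * Real.log t ^ m) • c m)) s := rfl
        _ = s • deriv (fun t => ∑ m ∈ Finset.range (j + 2 + 1),
              (t ^ lam * Real.log t ^ m) • c1 m) s := by rw [hev.deriv_eq]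
        _ = ∑ m ∈ Finset.range (j + 2 + 1), (s ^ lam * Real.log s ^ m) • c2 m := e2
    have hL := hEq s hs
    rw [hfun] at hL
    rw [LRic] at hL
    rw [h1, h2] at hL
    rw [mulVec_sum', mulVec_sum', mulVec_sum', ← Finset.sum_add_distrib,
      ← Finset.sum_add_distrib] at hL
    have hL2 : s ^ lam • ∑ m ∈ Finset.range (j + 3), (Real.log s) ^ m • d m
        = s ^ lam • f := by
      rw [← hL, Finset.smul_sum]
      refine Finset.sum_congr rfl fun m _ => ?_
      simp only [hddef]
      simp only [smul_add, smul_smul]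
    exact smul_right_injective (Fin 4 → ℝ) (Real.rpow_pos_of_pos hs0 lam).ne' hL2
  -- coefficients vanish
  have hd0 : ∀ m, 1 ≤ m → m < j + 3 → d m = 0 := by
    intro m hm1 hm2
    funext i
    refine coeff_zero_of_vanish (j + 3) (fun l => d l i) (f i) ?_ m hm1 hm2
    intro x hx
    have hmem : Real.exp x ∈ Set.Ioo (0 : ℝ) 1 :=
      ⟨Real.exp_pos x, Real.exp_lt_one_iff.mpr hx⟩
    have h := congrFun (hLR (Real.exp x) hmem) i
    rw [Real.log_exp] at h
    simpa only [Finset.sum_apply, Pi.smul_apply, smul_eq_mul] using h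
  have hdk := hd0 (j + 2) (by omega) (by omega)
  have hdk1 := hd0 (j + 1) (by omega) (by omega)
  -- explicit coefficient values
  set u : Fin 4 → ℝ := hv (j + 1) with hu
  set v : Fin 4 → ℝ := hv (j + 2) with hvv
  set a : ℝ := (j : ℝ) + 2 with ha
  have ecv : c (j + 2) = v := if_pos (by omega)
  have ecu : c (j + 1) = u := if_pos (by omega)
  have ec1v : c1 (j + 2) = lam • v := by
    rw [hc1def]
    show lam • c (j + 2) + _ • c (j + 2 + 1) = _
    rw [show j + 2 + 1 = j + 3 from rfl, hc3, ecv, smul_zero, add_zero]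
  have ec1u : c1 (j + 1) = lam • u + a • v := by
    rw [hc1def]
    show lam • c (j + 1) + ((j + 1 : ℕ) + 1 : ℝ) • c (j + 1 + 1) = _
    rw [show j + 1 + 1 = j + 2 from rfl, ecu, ecv]
    congr 1
    push_cast [ha]
    ring_nf
  have ec2v : c2 (j + 2) = (lam * lam) • v := by
    rw [hc2def]
    show lam • c1 (j + 2) + _ • c1 (j + 2 + 1) = _
    rw [show j + 2 + 1 = j + 3 from rfl, hc13, ec1v, smul_zero, add_zero, smul_smul]
  have ec2u : c2 (j + 1) = (lam * lam) • u + (2 * (a * lam)) • v := by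
    rw [hc2def]
    show lam • c1 (j + 1) + ((j + 1 : ℕ) + 1 : ℝ) • c1 (j + 1 + 1) = _
    rw [show j + 1 + 1 = j + 2 from rfl, ec1u, ec1v,
      show ((j + 1 : ℕ) + 1 : ℝ) = a by push_cast [ha]; ring]
    module
  -- equation for d (j+2)
  have hMv : (M n lam).mulVec v = 0 := by
    have h := hdk
    simp only [hddef] at h
    rw [ec2v, ec1v, ecv, Matrix.mulVec_smul, Matrix.mulVec_smul] at h
    rw [M_eq n lam, Matrix.add_mulVec, Matrix.add_mulVec, Matrix.smul_mulVec,
      Matrix.smul_mulVec]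
    calc lam ^ 2 • (A2 n).mulVec v + lam • (A1 n).mulVec v + (A0 n).mulVec v
        = (lam * lam) • (A2 n).mulVec v + lam • (A1 n).mulVec v + (A0 n).mulVec v := by
          rw [pow_two]
      _ = 0 := h
  -- equation for d (j+1)
  have hMu : (M n lam).mulVec u + a • (Mder n 1 lam).mulVec v = 0 := by
    have h := hdk1
    simp only [hddef] at h
    rw [ec2u, ec1u, ecu] at h
    rw [Matrix.mulVec_add, Matrix.mulVec_add, Matrix.mulVec_smul, Matrix.mulVec_smul,
      Matrix.mulVec_smul, Matrix.mulVec_smul] at h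
    rw [M_eq n lam, Mder_one, Matrix.add_mulVec, Matrix.add_mulVec, Matrix.add_mulVec,
      Matrix.smul_mulVec, Matrix.smul_mulVec, Matrix.smul_mulVec]
    calc lam ^ 2 • (A2 n).mulVec u + lam • (A1 n).mulVec u + (A0 n).mulVec u
          + a • ((2 * lam) • (A2 n).mulVec v + (A1 n).mulVec v)
        = (lam * lam) • (A2 n).mulVec u + (2 * (a * lam)) • (A2 n).mulVec v
          + (lam • (A1 n).mulVec u + a • (A1 n).mulVec v) + (A0 n).mulVec u := by
          module
      _ = 0 := h
  have ha0 : a ≠ 0 := by rw [ha]; positivity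
  refine ⟨hMv, ⟨(-a⁻¹) • u, ?_⟩⟩
  rw [Matrix.mulVecLin_apply, Matrix.mulVec_smul]
  have hMu' : (M n lam).mulVec u = -(a • (Mder n 1 lam).mulVec v) :=
    eq_neg_of_add_eq_zero_left hMu
  rw [hMu', smul_neg, neg_smul, neg_neg, smul_smul, inv_mul_cancel₀ ha0, one_smul]
end

section
/- Let n ≥ 3 be an integer, λ > 0 a real number with λ ≠ n, k ∈ ℕ and h₀, …, h_k ∈ ℝ⁴, and set h(s) := Σ_{m=0}^{k} s^λ·(log s)^m·h_m. If (L_Ric h)(s) = 0 for all s > 0, then there exist ω₀, …, ω_k ∈ ℝ² such that, setting ω(s) := Σ_{m=0}^{k} s^λ·(log s)^m·ω_m, one has h(s) + (L_{δ*} ω)(s) = 0 for all s > 0. -/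
open Matrix

/-- `N₁`: the coefficient of `λ` in `D(λ) = N₁λ + N₀`, where `D(λ)` is the indicial
family `I(δ*, λ)` of the symmetric gradient. -/
noncomputable def N1 : Matrix (Fin 4) (Fin 2) ℝ :=
  !![1, 0;
     0, 1 / 2;
     0, 0;
     0, 0]

/-- `N₀`: the constant coefficient in `D(λ) = N₁λ + N₀`. -/
noncomputable def N0 : Matrix (Fin 4) (Fin 2) ℝ :=
  !![0, 0;
     0, 1 / 2;
     1, 0;
     0, 0]

/-- The indicial (Euler) operator of the symmetric gradient,
`(L_{δ*} ω)(s) = N₁ (s ω′(s)) + N₀ ω(s)`. -/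
noncomputable def LDel (ω : ℝ → (Fin 2 → ℝ)) : ℝ → (Fin 4 → ℝ) :=
  fun s => N1.mulVec (s • deriv ω s) + N0.mulVec (ω s)

noncomputable def Fsum (k : ℕ) (lam : ℝ) {d : ℕ} (c : ℕ → Fin d → ℝ) : ℝ → (Fin d → ℝ) :=
  fun s => ∑ m ∈ Finset.range (k + 1), (s ^ lam * Real.log s ^ m) • c m

noncomputable def Eshift (lam : ℝ) {d : ℕ} (c : ℕ → Fin d → ℝ) : ℕ → Fin d → ℝ :=
  fun m => lam • c m + ((m : ℝ) + 1) • c (m + 1)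

lemma hasDerivAt_Fsum (k : ℕ) (lam : ℝ) {d : ℕ} (c : ℕ → Fin d → ℝ) {s : ℝ} (hs : 0 < s) :
    HasDerivAt (Fsum k lam c)
      (∑ m ∈ Finset.range (k + 1),
        ((lam * s ^ (lam - 1)) * Real.log s ^ m
          + s ^ lam * ((m : ℝ) * Real.log s ^ (m - 1) * s⁻¹)) • c m) s := by
  apply HasDerivAt.fun_sum
  intro m _
  exact ((Real.hasDerivAt_rpow_const (Or.inl hs.ne')).mul
    ((Real.hasDerivAt_log hs.ne').pow m)).smul_const (c m)

lemma sD_Fsum (k : ℕ) (lam : ℝ) {d : ℕ} (c : ℕ → Fin d → ℝ) (hc : c (k + 1) = 0)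
    {s : ℝ} (hs : 0 < s) :
    s • deriv (Fsum k lam c) s = Fsum k lam (Eshift lam c) s := by
  set L := Real.log s with hL
  have hss : s * s ^ (lam - 1) = s ^ lam := by
    have h1 : (1 : ℝ) + (lam - 1) = lam := by ring
    calc s * s ^ (lam - 1) = s ^ (1:ℝ) * s ^ (lam - 1) := by rw [Real.rpow_one]
      _ = s ^ ((1:ℝ) + (lam - 1)) := (Real.rpow_add hs 1 (lam - 1)).symm
      _ = s ^ lam := by rw [h1]
  rw [(hasDerivAt_Fsum k lam c hs).deriv, Finset.smul_sum]
  have lhs_eq : ∀ m ∈ Finset.range (k + 1),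
      s • (((lam * s ^ (lam - 1)) * L ^ m + s ^ lam * ((m : ℝ) * L ^ (m - 1) * s⁻¹)) • c m)
        = ((s ^ lam * L ^ m) * lam) • c m + (s ^ lam * (m : ℝ) * L ^ (m - 1)) • c m := by
    intro m _
    rw [smul_smul, ← add_smul]
    congr 1
    field_simp
    rw [← hss]
    ring
  rw [Finset.sum_congr rfl lhs_eq, Finset.sum_add_distrib]
  have key : ∑ m ∈ Finset.range (k + 1), (s ^ lam * (m : ℝ) * L ^ (m - 1)) • c m
      = ∑ m ∈ Finset.range (k + 1), ((s ^ lam * L ^ m) * ((m : ℝ) + 1)) • c (m + 1) := by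
    rw [Finset.sum_range_succ' _ k, Finset.sum_range_succ]
    simp only [hc, smul_zero, add_zero, Nat.cast_zero, mul_zero, zero_mul, zero_smul]
    apply Finset.sum_congr rfl
    intro m _
    have h2 : (m + 1) - 1 = m := rfl
    rw [h2]
    exact congrArg (· • c (m + 1)) (by push_cast; ring)
  rw [key]
  unfold Fsum Eshift
  rw [← Finset.sum_add_distrib]
  apply Finset.sum_congr rfl
  intro m _
  rw [smul_add, smul_smul, smul_smul]

lemma mulVec_Fsum (k : ℕ) (lam : ℝ) {d e : ℕ} (A : Matrix (Fin e) (Fin d) ℝ)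
    (c : ℕ → Fin d → ℝ) (s : ℝ) :
    A.mulVec (Fsum k lam c s) = Fsum k lam (fun m => A.mulVec (c m)) s := by
  unfold Fsum
  simp only [← Matrix.mulVecLin_apply, map_sum, _root_.map_smul]

lemma Fsum_add (k : ℕ) (lam : ℝ) {d : ℕ} (c c' : ℕ → Fin d → ℝ) (s : ℝ) :
    Fsum k lam c s + Fsum k lam c' s = Fsum k lam (fun m => c m + c' m) s := by
  unfold Fsum
  rw [← Finset.sum_add_distrib]
  exact Finset.sum_congr rfl fun m _ => (smul_add _ _ _).symm

lemma Fsum_coeffs_zero (k : ℕ) (lam : ℝ) {d : ℕ} (c : ℕ → Fin d → ℝ)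
    (h : ∀ s : ℝ, 0 < s → Fsum k lam c s = 0) : ∀ m, m ≤ k → c m = 0 := by
  intro m hm
  funext i
  have hpoly : ∀ x : ℝ, ∑ j ∈ Finset.range (k + 1), c j i * x ^ j = 0 := by
    intro x
    have h1 := congrFun (h (Real.exp x) (Real.exp_pos x)) i
    simp only [Fsum, Finset.sum_apply, Pi.smul_apply, smul_eq_mul, Pi.zero_apply,
      Real.log_exp] at h1
    have h2 : ∑ j ∈ Finset.range (k + 1), Real.exp x ^ lam * (x ^ j * c j i) = 0 := by
      rw [← h1]
      exact Finset.sum_congr rfl fun j _ => by ring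
    rw [← Finset.mul_sum] at h2
    have h3 := (mul_eq_zero.mp h2).resolve_left
      (ne_of_gt (Real.rpow_pos_of_pos (Real.exp_pos x) lam))
    rw [← h3]
    exact Finset.sum_congr rfl fun j _ => by ring
  set p : Polynomial ℝ := ∑ j ∈ Finset.range (k + 1), Polynomial.C (c j i) * Polynomial.X ^ j
    with hp
  have hpe : p = 0 := by
    apply Polynomial.funext
    intro x
    simp only [hp, Polynomial.eval_finset_sum, Polynomial.eval_mul, Polynomial.eval_C,
      Polynomial.eval_pow, Polynomial.eval_X, Polynomial.eval_zero]
    exact hpoly x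
  have hcoeff : p.coeff m = c m i := by
    simp only [hp, Polynomial.finset_sum_coeff, Polynomial.coeff_C_mul, Polynomial.coeff_X_pow,
      mul_ite, mul_one, mul_zero]
    rw [Finset.sum_ite_eq (Finset.range (k + 1))]
    simp [Nat.lt_succ_of_le hm]
  rw [hpe] at hcoeff
  simpa using hcoeff.symm

lemma LRic_Fsum (n k : ℕ) (lam : ℝ) (c : ℕ → Fin 4 → ℝ) (hc1 : c (k + 1) = 0)
    (hc2 : c (k + 2) = 0) {s : ℝ} (hs : 0 < s) :
    LRic n (Fsum k lam c) s = Fsum k lam (fun m =>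
      (A2 n).mulVec (Eshift lam (Eshift lam c) m) + ((A1 n).mulVec (Eshift lam c m)
        + (A0 n).mulVec (c m))) s := by
  have hE1 : Eshift lam c (k + 1) = 0 := by
    simp [Eshift, hc1, show k + 1 + 1 = k + 2 from rfl, hc2]
  have h1 : sD (Fsum k lam c) s = Fsum k lam (Eshift lam c) s := sD_Fsum k lam c hc1 hs
  have hev : sD (Fsum k lam c) =ᶠ[nhds s] Fsum k lam (Eshift lam c) := by
    filter_upwards [Ioi_mem_nhds hs] with t ht
    exact sD_Fsum k lam c hc1 ht
  have h2 : sD (sD (Fsum k lam c)) s = Fsum k lam (Eshift lam (Eshift lam c)) s := by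
    show s • deriv (sD (Fsum k lam c)) s = _
    rw [hev.deriv_eq]
    exact sD_Fsum k lam _ hE1 hs
  unfold LRic
  rw [h2, h1, mulVec_Fsum, mulVec_Fsum, mulVec_Fsum, add_assoc, Fsum_add, Fsum_add]

lemma LDel_Fsum (k : ℕ) (lam : ℝ) (c : ℕ → Fin 2 → ℝ) (hc1 : c (k + 1) = 0)
    {s : ℝ} (hs : 0 < s) :
    LDel (Fsum k lam c) s = Fsum k lam (fun m =>
      N1.mulVec (Eshift lam c m) + N0.mulVec (c m)) s := by
  unfold LDel
  rw [sD_Fsum k lam c hc1 hs, mulVec_Fsum, mulVec_Fsum, Fsum_add]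

noncomputable def qseq (k : ℕ) (lam : ℝ) (b : ℕ → ℝ) : ℕ → ℝ := fun m =>
  if _ : m ≤ k then -(2 * b m + ((m : ℝ) + 1) * qseq k lam b (m + 1)) / (lam + 1) else 0
termination_by m => k + 1 - m
decreasing_by omega

lemma qseq_le {k : ℕ} {lam : ℝ} {b : ℕ → ℝ} {m : ℕ} (h : m ≤ k) :
    qseq k lam b m = -(2 * b m + ((m : ℝ) + 1) * qseq k lam b (m + 1)) / (lam + 1) := by
  rw [qseq]
  simp [h]

lemma qseq_gt {k : ℕ} {lam : ℝ} {b : ℕ → ℝ} {m : ℕ} (h : k < m) :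
    qseq k lam b m = 0 := by
  rw [qseq]
  simp [Nat.not_le.mpr h]

set_option maxHeartbeats 2000000 in
/-- Solving away log terms at a non-exceptional weight `λ > 0`, `λ ≠ n`, by a pure
gauge term: if `h(s) = Σ_{m≤k} s^λ (log s)^m h_m` satisfies `L_Ric h = 0` on `(0,∞)`,
then there are `ω_m` with `h + L_{δ*} ω = 0`, where
`ω(s) = Σ_{m≤k} s^λ (log s)^m ω_m`. -/
theorem solve_order_lambda_by_gauge (n : ℕ) (hn : 3 ≤ n) (lam : ℝ)
    (hpos : 0 < lam) (hne : lam ≠ (n : ℝ)) (k : ℕ) (hv : ℕ → Fin 4 → ℝ)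
    (hEq : ∀ s : ℝ, 0 < s →
      LRic n (fun t => ∑ m ∈ Finset.range (k + 1),
        (t ^ lam * Real.log t ^ m) • hv m) s = 0) :
    ∃ ω : ℕ → Fin 2 → ℝ, ∀ s : ℝ, 0 < s →
      (∑ m ∈ Finset.range (k + 1), (s ^ lam * Real.log s ^ m) • hv m)
        + LDel (fun t => ∑ m ∈ Finset.range (k + 1),
            (t ^ lam * Real.log t ^ m) • ω m) s = 0 := by
  classical
  set Hp : ℕ → Fin 4 → ℝ := fun m => if m ≤ k then hv m else 0 with hHp
  have hFsum_eq : Fsum k lam hv = Fsum k lam Hp := by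
    funext s
    exact Finset.sum_congr rfl fun m hm => by
      simp [hHp, Nat.lt_succ_iff.mp (Finset.mem_range.mp hm)]
  have hHp1 : Hp (k + 1) = 0 := by simp [hHp]
  have hHp2 : Hp (k + 2) = 0 := by simp [hHp]
  have hEq' : ∀ s : ℝ, 0 < s → LRic n (Fsum k lam Hp) s = 0 := by
    intro s hs
    rw [← hFsum_eq]
    exact hEq s hs
  set G : ℕ → Fin 4 → ℝ := fun m =>
      (A2 n).mulVec (Eshift lam (Eshift lam Hp) m) + ((A1 n).mulVec (Eshift lam Hp m)
        + (A0 n).mulVec (Hp m)) with hGdef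
  have hGle : ∀ m, m ≤ k → G m = 0 := by
    apply Fsum_coeffs_zero k lam G
    intro s hs
    rw [← LRic_Fsum n k lam Hp hHp1 hHp2 hs]
    exact hEq' s hs
  have hHpgt : ∀ m, k < m → Hp m = 0 := by
    intro m hm
    simp [hHp, Nat.not_le.mpr hm]
  have hGgt : ∀ m, k < m → G m = 0 := by
    intro m hm
    have h1 : Eshift lam Hp m = 0 := by
      simp [Eshift, hHpgt m hm, hHpgt (m + 1) (by omega)]
    have h1' : Eshift lam Hp (m + 1) = 0 := by
      simp [Eshift, hHpgt (m + 1) (by omega), hHpgt (m + 1 + 1) (by omega)]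
    have h2 : Eshift lam (Eshift lam Hp) m = 0 := by
      rw [show Eshift lam (Eshift lam Hp) m
        = lam • Eshift lam Hp m + ((m : ℝ) + 1) • Eshift lam Hp (m + 1) from rfl, h1, h1']
      simp
    simp [hGdef, h1, h2, hHpgt m hm, Matrix.mulVec_zero]
  have hG : ∀ m, G m = 0 := fun m => (le_or_gt m k).elim (hGle m) (hGgt m)
  have hlam0 : lam ≠ 0 := ne_of_gt hpos
  have hn3 : (3 : ℝ) ≤ (n : ℝ) := by exact_mod_cast hn
  -- component 3 (the d-component) vanishes
  have hd0 : ∀ j m, k + 1 ≤ m + j → Hp m 3 = 0 := by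
    intro j
    induction j with
    | zero => intro m hm; rw [hHpgt m (by omega)]; rfl
    | succ j ih =>
      intro m hm
      rcases le_or_gt m k with hmk | hmk
      · have e := congrFun (hG m) 3
        have z1 : Hp (m + 1) 3 = 0 := ih (m + 1) (by omega)
        have z2 : Hp (m + 1 + 1) 3 = 0 := ih (m + 1 + 1) (by omega)
        simp [hGdef, Eshift, Matrix.mulVec, dotProduct, A2, A1, A0,
          Fin.sum_univ_four, z1, z2] at e
        have e2 : lam * (lam - (n : ℝ)) * Hp m 3 = 0 := by linear_combination 2 * e
        rcases mul_eq_zero.mp e2 with h | h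
        · rcases mul_eq_zero.mp h with h' | h'
          · exact absurd h' hlam0
          · exact absurd (by linarith : lam = (n : ℝ)) hne
        · exact h
      · rw [hHpgt m hmk]; rfl
  have hd : ∀ m, Hp m 3 = 0 := fun m => hd0 (k + 1) m (by omega)
  -- the key first/third component relation
  have hw : ∀ m, Hp m 0 = lam * Hp m 2 + ((m : ℝ) + 1) * Hp (m + 1) 2 := by
    intro m
    have e0 := congrFun (hG m) 0
    have e2 := congrFun (hG m) 2
    simp [hGdef, Eshift, Matrix.mulVec, dotProduct, A2, A1, A0,
      Fin.sum_univ_four] at e0 e2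
    have key : ((n : ℝ) * (2 * (n : ℝ) - 2))
        * (Hp m 0 - lam * Hp m 2 - ((m : ℝ) + 1) * Hp (m + 1) 2) = 0 := by
      push_cast at e0 e2 ⊢
      linear_combination 2 * e0 + 2 * (n : ℝ) * e2
    have hnz : (n : ℝ) * (2 * (n : ℝ) - 2) ≠ 0 := by nlinarith [hn3]
    have := (mul_eq_zero.mp key).resolve_left hnz
    linarith
  -- construct the gauge one-forms
  set q : ℕ → ℝ := qseq k lam (fun j => Hp j 1) with hq
  refine ⟨fun m => ![-(Hp m 2), q m], ?_⟩
  intro s hs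
  set ω : ℕ → Fin 2 → ℝ := fun m => ![-(Hp m 2), q m] with hω
  have hω1 : ω (k + 1) = 0 := by
    funext i
    fin_cases i
    · simp [hω, hHp]
    · simp [hω, hq, qseq_gt (by omega : k < k + 1)]
  have hgoal : (∑ m ∈ Finset.range (k + 1), (s ^ lam * Real.log s ^ m) • hv m)
      + LDel (fun t => ∑ m ∈ Finset.range (k + 1), (t ^ lam * Real.log t ^ m) • ω m) s
      = Fsum k lam hv s + LDel (Fsum k lam ω) s := rfl
  rw [hgoal, hFsum_eq, LDel_Fsum k lam ω hω1 hs, Fsum_add]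
  unfold Fsum
  apply Finset.sum_eq_zero
  intro m hm
  have hmk : m ≤ k := Nat.lt_succ_iff.mp (Finset.mem_range.mp hm)
  have hcoeff : Hp m + (N1.mulVec (Eshift lam ω m) + N0.mulVec (ω m)) = 0 := by
    funext i
    have hlam1 : lam + 1 ≠ 0 := by positivity
    have hqrec : q m = -(2 * Hp m 1 + ((m : ℝ) + 1) * q (m + 1)) / (lam + 1) :=
      qseq_le hmk
    have hq2 : (lam + 1) * q m = -(2 * Hp m 1 + ((m : ℝ) + 1) * q (m + 1)) := by
      rw [hqrec]
      field_simp
    fin_cases i <;>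
        simp [hω, Eshift, Matrix.mulVec, dotProduct, N1, N0, Fin.sum_univ_two, hd m] <;>
      first
        | linear_combination hw m
        | linear_combination (1 / 2 : ℝ) * hq2
        | linear_combination hd m
  have hcoeff' : (fun m => Hp m + (N1 *ᵥ Eshift lam ω m + N0 *ᵥ ω m)) m = 0 := hcoeff
  rw [hcoeff', smul_zero]
end

section
/- Let n ≥ 3 be an integer, k ∈ ℕ and h₀, …, h_k ∈ ℝ⁴, and set h(s) := Σ_{m=0}^{k} s^n·(log s)^m·h_m. If (L_Ric h)(s) = 0 for all s > 0, then there exist ω₀, …, ω_k ∈ ℝ² and α ∈ ℝ such that, setting ω(s) := Σ_{m=0}^{k} s^n·(log s)^m·ω_m, one has h(s) + (L_{δ*} ω)(s) = s^n·(0,0,0,α) for all s > 0. -/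
open Matrix

/- ### Auxiliary lemmas -/

private lemma shift_deriv {d : ℕ} (n K : ℕ) (v : ℕ → Fin d → ℝ) (hK : v K = 0)
    {s : ℝ} (hs : 0 < s) :
    s • deriv (fun t => ∑ m ∈ Finset.range K, (t ^ (n:ℝ) * Real.log t ^ m) • v m) s
    = ∑ m ∈ Finset.range K, (s ^ (n:ℝ) * Real.log s ^ m) •
        ((n:ℝ) • v m + ((m:ℝ)+1) • v (m+1)) := by
  have hD : HasDerivAt (fun t => ∑ m ∈ Finset.range K, (t ^ (n:ℝ) * Real.log t ^ m) • v m)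
      (∑ m ∈ Finset.range K,
        (((n:ℝ) * s ^ ((n:ℝ)-1) * Real.log s ^ m
          + s ^ (n:ℝ) * ((m:ℝ) * Real.log s ^ (m-1) * s⁻¹)) • v m)) s := by
    apply HasDerivAt.fun_sum
    intro m _
    exact ((Real.hasDerivAt_rpow_const (Or.inl hs.ne')).mul
      ((Real.hasDerivAt_log hs.ne').pow m)).smul_const (v m)
  rw [hD.deriv, Finset.smul_sum]
  have hstep : ∀ m : ℕ, s • (((n:ℝ) * s ^ ((n:ℝ)-1) * Real.log s ^ m
          + s ^ (n:ℝ) * ((m:ℝ) * Real.log s ^ (m-1) * s⁻¹)) • v m)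
      = ((s ^ (n:ℝ) * Real.log s ^ m) * (n:ℝ)) • v m
        + ((m:ℝ) * (s ^ (n:ℝ) * Real.log s ^ (m-1))) • v m := by
    intro m
    rw [smul_smul, ← add_smul]
    congr 1
    rw [Real.rpow_sub_one hs.ne']
    field_simp
  simp only [hstep]
  rw [Finset.sum_add_distrib]
  have hRHS : ∀ m : ℕ, (s ^ (n:ℝ) * Real.log s ^ m) • ((n:ℝ) • v m + ((m:ℝ)+1) • v (m+1))
      = ((s ^ (n:ℝ) * Real.log s ^ m) * (n:ℝ)) • v m
        + (((m:ℝ)+1) * (s ^ (n:ℝ) * Real.log s ^ m)) • v (m+1) := by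
    intro m
    rw [smul_add, smul_smul, smul_smul]
    ring_nf
  simp only [hRHS]
  rw [Finset.sum_add_distrib]
  congr 1
  set f : ℕ → Fin d → ℝ := fun m => ((m:ℝ) * (s ^ (n:ℝ) * Real.log s ^ (m-1))) • v m with hf
  have h1 : ∑ m ∈ Finset.range (K+1), f m = ∑ m ∈ Finset.range K, f m + f K :=
    Finset.sum_range_succ f K
  have h2 : ∑ m ∈ Finset.range (K+1), f m = ∑ m ∈ Finset.range K, f (m+1) + f 0 :=
    Finset.sum_range_succ' f K
  have hf0 : f 0 = 0 := by simp [hf]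
  have hfK : f K = 0 := by simp [hf, hK]
  have hmain : ∑ m ∈ Finset.range K, f m = ∑ m ∈ Finset.range K, f (m+1) := by
    rw [hf0, add_zero] at h2; rw [hfK, add_zero] at h1; rw [← h1, h2]
  rw [hmain]
  apply Finset.sum_congr rfl
  intro m _
  simp only [hf, Nat.add_sub_cancel, Nat.cast_add, Nat.cast_one]

private lemma coeff_vanish {d : ℕ} (n K : ℕ) (w : ℕ → Fin d → ℝ)
    (h : ∀ s : ℝ, 0 < s →
      ∑ m ∈ Finset.range K, (s ^ (n:ℝ) * Real.log s ^ m) • w m = 0) :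
    ∀ m < K, w m = 0 := by
  have key : ∀ x : ℝ, ∑ m ∈ Finset.range K, x ^ m • w m = 0 := by
    intro x
    have h1 := h (Real.exp x) (Real.exp_pos x)
    rw [Real.log_exp] at h1
    have hpos : (0:ℝ) < (Real.exp x) ^ (n:ℝ) := Real.rpow_pos_of_pos (Real.exp_pos x) _
    have h2 : (Real.exp x ^ (n:ℝ)) • ∑ m ∈ Finset.range K, x ^ m • w m = 0 := by
      rw [Finset.smul_sum]
      simpa [smul_smul] using h1
    exact (smul_eq_zero.mp h2).resolve_left hpos.ne'
  intro m hm
  funext i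
  set p : Polynomial ℝ := ∑ j ∈ Finset.range K, Polynomial.C (w j i) * Polynomial.X ^ j with hp
  have hp0 : p = 0 := by
    apply Polynomial.funext
    intro x
    have hx := congrFun (key x) i
    simp only [Finset.sum_apply, Pi.smul_apply, smul_eq_mul, Pi.zero_apply] at hx
    simp only [hp, Polynomial.eval_finset_sum, Polynomial.eval_mul, Polynomial.eval_C,
      Polynomial.eval_pow, Polynomial.eval_X, Polynomial.eval_zero]
    rw [← hx]
    exact Finset.sum_congr rfl fun j _ => by ring
  have hc := congrArg (fun q => Polynomial.coeff q m) hp0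
  simp only [hp, Polynomial.finset_sum_coeff, Polynomial.coeff_C_mul, Polynomial.coeff_X_pow,
    Polynomial.coeff_zero, mul_ite, mul_one, mul_zero] at hc
  rw [Finset.sum_ite_eq (Finset.range K)] at hc
  simpa [Finset.mem_range, hm] using hc

/-- The shift operator on coefficient sequences. -/
private def Sh (n : ℕ) {d : ℕ} (v : ℕ → Fin d → ℝ) : ℕ → Fin d → ℝ :=
  fun m => (n:ℝ) • v m + ((m:ℝ)+1) • v (m+1)

/-- Downward recursion for the second gauge component. -/
private noncomputable def om2 (nr : ℝ) (b : ℕ → ℝ) : ℕ → ℕ → ℝ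
  | 0, _ => 0
  | (j+1), m => -(2 * b m + ((m:ℝ)+1) * om2 nr b j (m+1)) / (nr+1)

set_option maxHeartbeats 1600000 in
/-- Solving away log terms at the exceptional weight `λ = n` by a pure gauge term:
if `h(s) = Σ_{m≤k} s^n (log s)^m h_m` satisfies `L_Ric h = 0` on `(0,∞)`, then there
are `ω_m` and `α ∈ ℝ` with `h + L_{δ*} ω = s^n (0,0,0,α)`, where
`ω(s) = Σ_{m≤k} s^n (log s)^m ω_m`. -/
theorem solve_order_n_by_gauge (n : ℕ) (hn : 3 ≤ n) (k : ℕ) (hv : ℕ → Fin 4 → ℝ)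
    (hEq : ∀ s : ℝ, 0 < s →
      LRic n (fun t => ∑ m ∈ Finset.range (k + 1),
        (t ^ (n : ℝ) * Real.log t ^ m) • hv m) s = 0) :
    ∃ ω : ℕ → Fin 2 → ℝ, ∃ α : ℝ, ∀ s : ℝ, 0 < s →
      (∑ m ∈ Finset.range (k + 1), (s ^ (n : ℝ) * Real.log s ^ m) • hv m)
        + LDel (fun t => ∑ m ∈ Finset.range (k + 1),
            (t ^ (n : ℝ) * Real.log t ^ m) • ω m) s
        = s ^ (n : ℝ) • ![0, 0, 0, α] := by
  have hn3 : (3:ℝ) ≤ (n:ℝ) := by exact_mod_cast hn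
  have hnne : (n:ℝ) ≠ 0 := by linarith
  -- extended coefficients
  set v : ℕ → Fin 4 → ℝ := fun m => if m < k + 1 then hv m else 0 with hvdef
  have hvk : ∀ m, k + 1 ≤ m → v m = 0 := fun m hm => by
    simp [hvdef, Nat.not_lt.mpr hm]
    intro h; exact absurd h (by omega)
  have hvlt : ∀ m, m < k + 1 → v m = hv m := fun m hm => by
    simp [hvdef, hm]
    intro h; exact absurd h (by omega)
  have hsum4 : ∀ (u : ℕ → Fin 4 → ℝ), (∀ m, m < k+1 → u m = hv m) → (u (k+1) = 0) →
      ∀ t : ℝ, ∑ m ∈ Finset.range (k + 2), (t ^ (n:ℝ) * Real.log t ^ m) • u m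
        = ∑ m ∈ Finset.range (k + 1), (t ^ (n:ℝ) * Real.log t ^ m) • hv m := by
    intro u hu huk t
    rw [Finset.sum_range_succ, huk, smul_zero, add_zero]
    exact Finset.sum_congr rfl fun m hm => by
      rw [hu m (Finset.mem_range.mp hm)]
  -- the function equals the extended sum
  have hfun : (fun t => ∑ m ∈ Finset.range (k + 1),
        (t ^ (n : ℝ) * Real.log t ^ m) • hv m)
      = (fun t => ∑ m ∈ Finset.range (k + 2),
        (t ^ (n : ℝ) * Real.log t ^ m) • v m) := by
    funext t
    exact (hsum4 v hvlt (hvk _ le_rfl) t).symm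
  -- expansion of LRic
  have hSv : ∀ j, k + 2 ≤ j → Sh n v j = 0 := by
    intro j hj
    simp [Sh, hvk j (by omega), hvk (j+1) (by omega)]
  have hsD1 : ∀ s : ℝ, 0 < s →
      sD (fun t => ∑ m ∈ Finset.range (k + 2), (t ^ (n:ℝ) * Real.log t ^ m) • v m) s
      = ∑ m ∈ Finset.range (k + 2), (s ^ (n:ℝ) * Real.log s ^ m) • Sh n v m := by
    intro s hs
    exact shift_deriv n (k+2) v (hvk _ (by omega)) hs
  have hsD2 : ∀ s : ℝ, 0 < s →
      sD (sD (fun t => ∑ m ∈ Finset.range (k + 2), (t ^ (n:ℝ) * Real.log t ^ m) • v m)) s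
      = ∑ m ∈ Finset.range (k + 2), (s ^ (n:ℝ) * Real.log s ^ m) • Sh n (Sh n v) m := by
    intro s hs
    have heq : (sD (fun t => ∑ m ∈ Finset.range (k + 2), (t ^ (n:ℝ) * Real.log t ^ m) • v m))
        =ᶠ[nhds s] (fun t => ∑ m ∈ Finset.range (k + 2),
            (t ^ (n:ℝ) * Real.log t ^ m) • Sh n v m) := by
      filter_upwards [Ioi_mem_nhds hs] with t ht
      exact hsD1 t ht
    show s • deriv _ s = _
    rw [heq.deriv_eq]
    exact shift_deriv n (k+2) (Sh n v) (hSv _ le_rfl) hs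
  -- coefficients of LRic
  have hw : ∀ p, p < k + 2 →
      (A2 n).mulVec (Sh n (Sh n v) p) + (A1 n).mulVec (Sh n v p) + (A0 n).mulVec (v p) = 0 := by
    apply coeff_vanish n (k+2)
    intro s hs
    have h0 := hEq s hs
    rw [hfun] at h0
    unfold LRic at h0
    rw [hsD2 s hs, hsD1 s hs] at h0
    beta_reduce at h0
    rw [show (A2 n).mulVec (∑ m ∈ Finset.range (k + 2),
          (s ^ (n:ℝ) * Real.log s ^ m) • Sh n (Sh n v) m)
        = ∑ m ∈ Finset.range (k + 2),
            (s ^ (n:ℝ) * Real.log s ^ m) • (A2 n).mulVec (Sh n (Sh n v) m) by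
      rw [← Matrix.mulVecLin_apply, map_sum]
      exact Finset.sum_congr rfl fun m _ => by
        rw [_root_.map_smul, Matrix.mulVecLin_apply]] at h0
    rw [show (A1 n).mulVec (∑ m ∈ Finset.range (k + 2),
          (s ^ (n:ℝ) * Real.log s ^ m) • Sh n v m)
        = ∑ m ∈ Finset.range (k + 2),
            (s ^ (n:ℝ) * Real.log s ^ m) • (A1 n).mulVec (Sh n v m) by
      rw [← Matrix.mulVecLin_apply, map_sum]
      exact Finset.sum_congr rfl fun m _ => by
        rw [_root_.map_smul, Matrix.mulVecLin_apply]] at h0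
    rw [show (A0 n).mulVec (∑ m ∈ Finset.range (k + 2),
          (s ^ (n:ℝ) * Real.log s ^ m) • v m)
        = ∑ m ∈ Finset.range (k + 2),
            (s ^ (n:ℝ) * Real.log s ^ m) • (A0 n).mulVec (v m) by
      rw [← Matrix.mulVecLin_apply, map_sum]
      exact Finset.sum_congr rfl fun m _ => by
        rw [_root_.map_smul, Matrix.mulVecLin_apply]] at h0
    rw [← Finset.sum_add_distrib, ← Finset.sum_add_distrib] at h0
    rw [← h0]
    exact Finset.sum_congr rfl fun m _ => by rw [smul_add, smul_add]
  -- scalar relations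
  have rel1 : ∀ p, p < k + 2 →
      v p 0 = (n:ℝ) * v p 2 + ((p:ℝ)+1) * v (p+1) 2 := by
    intro p hp
    have e0 := congrFun (hw p hp) 0
    have e2 := congrFun (hw p hp) 2
    simp [Sh, A2, A1, A0, Matrix.mulVec, dotProduct, Fin.sum_univ_four,
      Matrix.cons_val_two, Matrix.cons_val_three, Matrix.tail_cons, Matrix.head_cons] at e0 e2
    have key : ((n:ℝ)^2 - n) *
        (v p 0 - ((n:ℝ) * v p 2 + ((p:ℝ)+1) * v (p+1) 2)) = 0 := by
      linear_combination e0 + (n:ℝ) * e2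
    have hne : ((n:ℝ)^2 - n) ≠ 0 := by nlinarith
    have := (mul_eq_zero.mp key).resolve_left hne
    linarith
  -- vanishing of the fourth component for m ≥ 1
  have reld : ∀ j m, 1 ≤ m → k + 2 ≤ m + j → v m 3 = 0 := by
    intro j
    induction j with
    | zero =>
      intro m _ h2
      rw [hvk m (by omega)]
      rfl
    | succ j ih =>
      intro m h1 h2
      by_cases hm : k + 2 ≤ m + j
      · exact ih m h1 hm
      obtain ⟨p, rfl⟩ : ∃ p, m = p + 1 := ⟨m - 1, by omega⟩
      have e3 := congrFun (hw p (by omega)) 3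
      simp [Sh, A2, A1, A0, Matrix.mulVec, dotProduct, Fin.sum_univ_four,
        Matrix.cons_val_two, Matrix.cons_val_three, Matrix.tail_cons, Matrix.head_cons] at e3
      have hI : v (p + 1 + 1) 3 = 0 := ih (p + 2) (by omega) (by omega)
      have key : (((p:ℝ) + 1) * (n:ℝ)) * v (p + 1) 3 = 0 := by
        linear_combination 2 * e3 - ((p:ℝ) + 1) * ((p:ℝ) + 2) * hI
      have hne : ((p:ℝ) + 1) * (n:ℝ) ≠ 0 := by positivity
      exact (mul_eq_zero.mp key).resolve_left hne
  have hd : ∀ m, 1 ≤ m → v m 3 = 0 := fun m h1 => reld (k + 2) m h1 (by omega)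
  -- gauge construction
  set ω2 : ℕ → ℝ := fun m => om2 (n:ℝ) (fun j => v j 1) (k + 1 - m) m with hω2def
  have hω2top : ∀ m, k + 1 ≤ m → ω2 m = 0 := by
    intro m hm
    have h0 : k + 1 - m = 0 := by omega
    simp [hω2def, h0, om2]
  have hn1 : (n:ℝ) + 1 ≠ 0 := by linarith
  have hω2rec : ∀ m, m ≤ k →
      ((n:ℝ) + 1) * ω2 m = -(2 * v m 1 + ((m:ℝ) + 1) * ω2 (m + 1)) := by
    intro m hm
    have h1 : k + 1 - m = (k - m) + 1 := by omega
    have h2 : k + 1 - (m + 1) = k - m := by omega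
    rw [hω2def]
    simp only [h1, h2, om2]
    field_simp
  set ω : ℕ → Fin 2 → ℝ := fun m => ![-(v m 2), ω2 m] with hωdef
  have hωtop : ∀ m, k + 1 ≤ m → ω m = 0 := by
    intro m hm
    funext i
    fin_cases i <;> simp [hωdef, hω2top m hm, hvk m hm]
  refine ⟨ω, hv 0 3, ?_⟩
  intro s hs
  -- rewrite the ω-sum over range (k+2)
  have hωsum : (fun t => ∑ m ∈ Finset.range (k + 1), (t ^ (n:ℝ) * Real.log t ^ m) • ω m)
      = (fun t => ∑ m ∈ Finset.range (k + 2), (t ^ (n:ℝ) * Real.log t ^ m) • ω m) := by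
    funext t
    have : ∑ m ∈ Finset.range (k + 2), (t ^ (n:ℝ) * Real.log t ^ m) • ω m
        = ∑ m ∈ Finset.range (k + 1), (t ^ (n:ℝ) * Real.log t ^ m) • ω m := by
      rw [Finset.sum_range_succ, hωtop (k + 1) le_rfl, smul_zero, add_zero]
    exact this.symm
  have hlin : ∀ {e : ℕ} (A : Matrix (Fin 4) (Fin e) ℝ) (u : ℕ → Fin e → ℝ),
      A.mulVec (∑ m ∈ Finset.range (k + 2), (s ^ (n:ℝ) * Real.log s ^ m) • u m)
      = ∑ m ∈ Finset.range (k + 2), (s ^ (n:ℝ) * Real.log s ^ m) • A.mulVec (u m) := by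
    intro e A u
    rw [← Matrix.mulVecLin_apply, map_sum]
    exact Finset.sum_congr rfl fun m _ => by rw [_root_.map_smul, Matrix.mulVecLin_apply]
  rw [hωsum]
  unfold LDel
  rw [shift_deriv n (k + 2) ω (hωtop _ (by omega)) hs, hlin, hlin,
    ← hsum4 v hvlt (hvk _ le_rfl) s, ← Finset.sum_add_distrib, ← Finset.sum_add_distrib]
  -- coefficientwise identities
  have claim : ∀ m ∈ Finset.range (k + 2),
      (s ^ (n:ℝ) * Real.log s ^ m) • v m
        + ((s ^ (n:ℝ) * Real.log s ^ m) • N1.mulVec ((n:ℝ) • ω m + ((m:ℝ)+1) • ω (m+1))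
           + (s ^ (n:ℝ) * Real.log s ^ m) • N0.mulVec (ω m))
      = (s ^ (n:ℝ) * Real.log s ^ m) •
          (if m = 0 then ![0, 0, 0, hv 0 3] else (0 : Fin 4 → ℝ)) := by
    intro m hm
    rw [← smul_add, ← smul_add]
    congr 1
    have hcore : v m + (N1.mulVec ((n:ℝ) • ω m + ((m:ℝ)+1) • ω (m+1)) + N0.mulVec (ω m))
        = if m = 0 then ![0, 0, 0, hv 0 3] else (0 : Fin 4 → ℝ) := by
      have hrel := rel1 m (Finset.mem_range.mp hm)
      funext i
      fin_cases i
      · -- component 0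
        simp [N1, N0, Matrix.mulVec, dotProduct, Fin.sum_univ_two, hωdef,
          Matrix.head_cons]
        rcases eq_or_ne m 0 with h0 | h0
        · subst h0
          simp
          push_cast at hrel ⊢
          linear_combination hrel
        · simp [h0]
          push_cast at hrel ⊢
          linear_combination hrel
      · -- component 1
        by_cases hmk : m ≤ k
        · have hr := hω2rec m hmk
          simp [N1, N0, Matrix.mulVec, dotProduct, Fin.sum_univ_two, hωdef,
            Matrix.head_cons]
          rcases eq_or_ne m 0 with h0 | h0
          · subst h0
            simp
            push_cast at hr ⊢
            linear_combination hr / 2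
          · simp [h0]
            push_cast at hr ⊢
            linear_combination hr / 2
        · have hm1 : m ≠ 0 := by omega
          have hz1 : v m 1 = 0 := by rw [hvk m (by omega)]; rfl
          simp [N1, N0, Matrix.mulVec, dotProduct, Fin.sum_univ_two, hωdef,
            Matrix.head_cons, hω2top m (by omega), hω2top (m + 1) (by omega), hz1, hm1]
      · -- component 2
        simp [N1, N0, Matrix.mulVec, dotProduct, Fin.sum_univ_two, hωdef,
          Matrix.head_cons]
        rcases eq_or_ne m 0 with h0 | h0
        · subst h0; simp
        · simp [h0]
      · -- component 3
        rcases eq_or_ne m 0 with h0 | h0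
        · subst h0
          have hv03 : v 0 3 = hv 0 3 := by rw [hvlt 0 (by omega)]
          simp [N1, N0, Matrix.mulVec, dotProduct, Fin.sum_univ_two, hωdef,
            Matrix.head_cons, hv03]
        · have hd3 := hd m (by omega)
          simp [N1, N0, Matrix.mulVec, dotProduct, Fin.sum_univ_two, hωdef,
            Matrix.head_cons, h0, hd3]
    rw [hcore]
  rw [Finset.sum_congr rfl claim]
  rw [Finset.sum_eq_single_of_mem 0 (Finset.mem_range.mpr (by omega))
    (fun b _ hb => by simp [hb])]
  simp
end
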